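/- Let E be a finite-dimensional real inner product space, let Z be a separable metric space equipped with its Borel σ-algebra, and let μ be a Borel probability measure on Z that is strictly positive (μ(U) > 0 for every nonempty open U ⊆ Z). Let ψ : E × Z → ℝ^d be linear in its first argument, continuous in its second argument for each fixed first argument, and satisfy ∫_Z ‖ψ(ξ, z)‖² dμ(z) < ∞ for every ξ ∈ E. Let (z_i)_{i ≥ 1} be an i.i.d. sequence of Z-valued random variables with law μ, defined on some probability space. Then almost surely there exists an integer M₀ such that for every m ≥ M₀, { ξ ∈ E : Σ_{i=1}^m ‖ψ(ξ, z_i)‖² = 0 } = { ξ ∈ E : ∫_Z ‖ψ(ξ, z)‖² dμ(z) = 0 } = { ξ ∈ E : ψ(ξ, z) = 0 for all z ∈ Z }. -/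

import Mathlib

open MeasureTheory ProbabilityTheory

/-- Auxiliary: an antitone `ℕ`-valued sequence is eventually constant. -/
lemma stmt6_aux_antitone_stab (f : ℕ → ℕ) (hf : ∀ m n, m ≤ n → f n ≤ f m) :
    ∃ M₀ : ℕ, ∀ m ≥ M₀, f m = f M₀ := by
  obtain ⟨M₀, hM₀⟩ : sInf (Set.range f) ∈ Set.range f :=
    Nat.sInf_mem (Set.range_nonempty f)
  refine ⟨M₀, fun m hm => ?_⟩
  have h1 : f m ≤ f M₀ := hf _ _ hm
  have h2 : sInf (Set.range f) ≤ f m := Nat.sInf_le ⟨m, rfl⟩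
  omega

/-- Let `E` be a finite-dimensional real inner product space, `Z` a
separable metric space with a strictly positive Borel probability measure `μ`, and
`ψ : E × Z → ℝ^d` linear in the first argument, continuous in the second, and square
integrable in `z` for each fixed first argument.  For an i.i.d. sequence `z_i` with law
`μ`, almost surely there is `M₀` such that for all `m ≥ M₀` the empirical nullspace
`{ξ : Σ_{i<m} ‖ψ(ξ,z_i)‖² = 0}` equals `{ξ : ∫ ‖ψ(ξ,z)‖² dμ = 0}`, which equals
`{ξ : ψ(ξ,z) = 0 for all z}`. -/
theorem stmt6
    {E : Type*} [NormedAddCommGroup E] [InnerProductSpace ℝ E] [FiniteDimensional ℝ E]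
    {Z : Type*} [MetricSpace Z] [TopologicalSpace.SeparableSpace Z]
    [MeasurableSpace Z] [BorelSpace Z]
    (μ : Measure Z) [IsProbabilityMeasure μ]
    (hμpos : ∀ U : Set Z, IsOpen U → U.Nonempty → 0 < μ U)
    (d : ℕ) (ψ : E → Z → EuclideanSpace ℝ (Fin d))
    (hlin : ∀ z : Z, IsLinearMap ℝ fun ξ : E => ψ ξ z)
    (hcont : ∀ ξ : E, Continuous (ψ ξ))
    (hint : ∀ ξ : E, Integrable (fun z => ‖ψ ξ z‖ ^ 2) μ)
    {Ω : Type*} [MeasureSpace Ω] [IsProbabilityMeasure (volume : Measure Ω)]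
    (z : ℕ → Ω → Z) (hmeas : ∀ i, Measurable (z i))
    (hlaw : ∀ i, Measure.map (z i) volume = μ)
    (hindep : iIndepFun z volume) :
    ∀ᵐ ω ∂(volume : Measure Ω), ∃ M₀ : ℕ, ∀ m ≥ M₀,
      {ξ : E | ∑ i ∈ Finset.range m, ‖ψ ξ (z i ω)‖ ^ 2 = 0}
        = {ξ : E | ∫ z', ‖ψ ξ z'‖ ^ 2 ∂μ = 0} ∧
      {ξ : E | ∫ z', ‖ψ ξ z'‖ ^ 2 ∂μ = 0} = {ξ : E | ∀ z' : Z, ψ ξ z' = 0} := by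
  classical
  -- the deterministic equality of the population nullspace
  have hNeq : {ξ : E | ∫ z', ‖ψ ξ z'‖ ^ 2 ∂μ = 0} = {ξ : E | ∀ z' : Z, ψ ξ z' = 0} := by
    ext ξ
    simp only [Set.mem_setOf_eq]
    constructor
    · intro h0
      have hae : (fun z' => ‖ψ ξ z'‖ ^ 2) =ᵐ[μ] 0 :=
        (integral_eq_zero_iff_of_nonneg (fun z' => sq_nonneg _) (hint ξ)).mp h0
      by_contra hne
      push_neg at hne
      obtain ⟨z₀, hz₀⟩ := hne
      have hUo : IsOpen {z' : Z | ψ ξ z' ≠ 0} :=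
        isOpen_compl_singleton.preimage (hcont ξ)
      have hpos : 0 < μ {z' : Z | ψ ξ z' ≠ 0} := hμpos _ hUo ⟨z₀, hz₀⟩
      have hnull : μ {z' : Z | ψ ξ z' ≠ 0} = 0 := by
        refine measure_mono_null ?_ (ae_iff.mp hae)
        intro z' hz'
        simp only [Set.mem_setOf_eq, Pi.zero_apply] at hz' ⊢
        intro h
        exact hz' (by simpa using h)
      exact hpos.ne' hnull
    · intro h
      simp [h]
  -- probability that an open set is never hit is zero
  have hhit : ∀ U : Set Z, IsOpen U → U.Nonempty →
      (volume : Measure Ω) {ω | ∀ i, z i ω ∉ U} = 0 := by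
    intro U hU hne
    have hUm : MeasurableSet U := hU.measurableSet
    have hlt : μ Uᶜ < 1 := by
      rw [prob_compl_eq_one_sub hUm]
      exact ENNReal.sub_lt_self ENNReal.one_ne_top one_ne_zero (hμpos U hU hne).ne'
    have key : ∀ m : ℕ, (volume : Measure Ω) (⋂ i, (z i) ⁻¹' Uᶜ) ≤ (μ Uᶜ) ^ m := by
      intro m
      calc (volume : Measure Ω) (⋂ i, (z i) ⁻¹' Uᶜ)
          ≤ (volume : Measure Ω) (⋂ i ∈ Finset.range m, (z i) ⁻¹' Uᶜ) :=
            measure_mono (by intro ω hω; simp only [Set.mem_iInter] at hω ⊢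
                             intro i _; exact hω i)
        _ = ∏ i ∈ Finset.range m, (volume : Measure Ω) ((z i) ⁻¹' Uᶜ) :=
            hindep.meas_biInter (fun i _ => ⟨Uᶜ, hUm.compl, rfl⟩)
        _ = ∏ _i ∈ Finset.range m, μ Uᶜ := by
            refine Finset.prod_congr rfl fun i _ => ?_
            rw [← hlaw i, Measure.map_apply (hmeas i) hUm.compl]
        _ = (μ Uᶜ) ^ m := by simp
    have h0 : (volume : Measure Ω) (⋂ i, (z i) ⁻¹' Uᶜ) = 0 := by
      have := ge_of_tendsto' (ENNReal.tendsto_pow_atTop_nhds_zero_of_lt_one hlt) key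
      exact le_antisymm this (zero_le)
    have : {ω | ∀ i, z i ω ∉ U} = ⋂ i, (z i) ⁻¹' Uᶜ := by
      ext ω; simp [Set.mem_iInter]
    rw [this]; exact h0
  -- second countability and a countable basis
  haveI : SecondCountableTopology Z := UniformSpace.secondCountable_of_separable Z
  obtain ⟨b, hbc, hbne, hb⟩ := TopologicalSpace.exists_countable_basis Z
  -- a.s. every nonempty basic open set is hit
  have hG : ∀ᵐ ω ∂(volume : Measure Ω), ∀ U ∈ b, U.Nonempty → ∃ i, z i ω ∈ U := by
    rw [ae_ball_iff hbc]
    intro U hU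
    by_cases hne : U.Nonempty
    · have h0 := hhit U (hb.isOpen hU) hne
      rw [ae_iff]
      refine measure_mono_null ?_ h0
      intro ω hω
      simp only [Set.mem_setOf_eq] at hω ⊢
      push_neg at hω
      exact hω.2
    · filter_upwards with ω h; exact absurd h hne
  filter_upwards [hG] with ω hω
  -- the range of the sample is dense
  have hdense : Dense (Set.range fun i => z i ω) := by
    rw [hb.dense_iff]
    intro o ho hone
    obtain ⟨i, hi⟩ := hω o ho hone
    exact ⟨z i ω, hi, ⟨i, rfl⟩⟩
  -- the decreasing sequence of empirical nullspaces
  set L : Z → E →ₗ[ℝ] EuclideanSpace ℝ (Fin d) :=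
    fun z' => IsLinearMap.mk' (fun ξ : E => ψ ξ z') (hlin z') with hL
  set W : ℕ → Submodule ℝ E :=
    fun m => ⨅ i ∈ Finset.range m, LinearMap.ker (L (z i ω)) with hW
  have hWmem : ∀ m (ξ : E), ξ ∈ W m ↔ ∀ i < m, ψ ξ (z i ω) = 0 := by
    intro m ξ
    simp [hW, Submodule.mem_iInf, LinearMap.mem_ker, hL, Finset.mem_range]
  have hWanti : ∀ m n, m ≤ n → W n ≤ W m := by
    intro m n hmn ξ hξ
    rw [hWmem] at hξ ⊢
    exact fun i hi => hξ i (lt_of_lt_of_le hi hmn)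
  obtain ⟨M₀, hM₀⟩ := stmt6_aux_antitone_stab (fun m => Module.finrank ℝ (W m))
    (fun m n hmn => Submodule.finrank_mono (hWanti m n hmn))
  have hWeq : ∀ m ≥ M₀, W m = W M₀ := fun m hm =>
    Submodule.eq_of_le_of_finrank_le (hWanti M₀ m hm) (hM₀ m hm).ge
  -- W M₀ is exactly the set of ξ with ψ ξ ≡ 0
  have hWN : (W M₀ : Set E) = {ξ : E | ∀ z' : Z, ψ ξ z' = 0} := by
    ext ξ
    simp only [SetLike.mem_coe, Set.mem_setOf_eq]
    constructor
    · intro hξ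
      have hall : ∀ i, ψ ξ (z i ω) = 0 := by
        intro i
        have h1 : ξ ∈ W (max M₀ (i + 1)) := by
          rw [hWeq _ (le_max_left _ _)]; exact hξ
        exact (hWmem _ ξ).mp h1 i (lt_of_lt_of_le (Nat.lt_succ_self i) (le_max_right _ _))
      have : ψ ξ = fun _ => 0 := by
        refine Continuous.ext_on hdense (hcont ξ) continuous_const ?_
        rintro _ ⟨i, rfl⟩
        exact hall i
      intro z'
      exact congrFun this z'
    · intro h
      rw [hWmem]
      exact fun i _ => h _
  -- final assembly
  refine ⟨M₀, fun m hm => ⟨?_, hNeq⟩⟩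
  rw [hNeq, ← hWN, ← hWeq m hm]
  ext ξ
  simp only [Set.mem_setOf_eq, SetLike.mem_coe, hWmem, Finset.mem_range]
  rw [Finset.sum_eq_zero_iff_of_nonneg (fun i _ => sq_nonneg _)]
  constructor
  · intro h i hi
    have := h i (Finset.mem_range.mpr hi)
    simpa [pow_eq_zero_iff, norm_eq_zero] using this
  · intro h i hi
    rw [h i (Finset.mem_range.mp hi)]
    simp
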